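/- In G(ω+ω,1122), the vertex set {(0,x) : 0 < x < ω} ∪ {(ω,ω+x) : 0 < x < ω} forms a copy of K_{ω,ω}, and consequently G(ω,1122) ≇ G(ω+ω,1122). -/

import Mathlib

abbrev OV (o : Ordinal) := {p : Ordinal × Ordinal // p.1 < p.2 ∧ p.2 < o}

def OG1122 (o : Ordinal) : SimpleGraph (OV o) where
  Adj a b := a.val.2 < b.val.1 ∨ b.val.2 < a.val.1
  symm := ⟨fun a b h => Or.symm h⟩
  loopless := ⟨fun a h => by
    rcases h with h | h <;> exact absurd (a.prop.1.trans h) (lt_irrefl _)⟩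

open Ordinal

lemma OG_adj {o : Ordinal} (a b : OV o) :
    (OG1122 o).Adj a b ↔ (a.val.2 < b.val.1 ∨ b.val.2 < a.val.1) := Iff.rfl

lemma Iio_finite {z : Ordinal} (hz : z < omega0) : (Set.Iio z).Finite := by
  obtain ⟨n, rfl⟩ := lt_omega0.mp hz
  have : Set.Iio ((n : ℕ) : Ordinal) ⊆ (fun m : ℕ => (m : Ordinal)) '' Set.Iio n := by
    intro a ha
    obtain ⟨m, rfl⟩ := lt_omega0.mp (ha.trans (nat_lt_omega0 n))
    exact ⟨m, by simpa using (ha : (m : Ordinal) < (n : Ordinal)), rfl⟩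
  exact ((Set.finite_Iio n).image _).subset this

lemma sec_finite {z : Ordinal} (hz : z < omega0) :
    {v : OV omega0 | v.val.2 < z}.Finite := by
  have h : Subtype.val '' {v : OV omega0 | v.val.2 < z} ⊆ Set.Iio z ×ˢ Set.Iio z := by
    rintro p ⟨v, hv, rfl⟩
    exact ⟨v.prop.1.trans hv, hv⟩
  exact Set.Finite.of_finite_image (((Iio_finite hz).prod (Iio_finite hz)).subset h)
    (Subtype.val_injective.injOn)

lemma no_Kww (A B : Set (OV omega0)) (hA : A.Infinite) (hB : B.Infinite)
    (hAI : ∀ u ∈ A, ∀ v ∈ A, ¬ (OG1122 omega0).Adj u v)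
    (hBI : ∀ u ∈ B, ∀ v ∈ B, ¬ (OG1122 omega0).Adj u v)
    (hAB : ∀ u ∈ A, ∀ v ∈ B, (OG1122 omega0).Adj u v) : False := by
  obtain ⟨a0, ha0⟩ := hA.nonempty
  obtain ⟨b0, hb0⟩ := hB.nonempty
  have hz0 : b0.val.1 < omega0 := b0.prop.1.trans b0.prop.2
  have hx0 : a0.val.1 < omega0 := a0.prop.1.trans a0.prop.2
  obtain ⟨a, haA, haN⟩ : ∃ a ∈ A, ¬ a.val.2 < b0.val.1 := by
    by_contra h
    push_neg at h
    exact (hA.mono (fun v hv => (h v hv : v.val.2 < b0.val.1))) (sec_finite hz0)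
  obtain ⟨b, hbB, hbN⟩ : ∃ b ∈ B, ¬ b.val.2 < a0.val.1 := by
    by_contra h
    push_neg at h
    exact (hB.mono (fun v hv => (h v hv : v.val.2 < a0.val.1))) (sec_finite hx0)
  have h1 : b0.val.2 < a.val.1 := ((OG_adj a b0).mp (hAB a haA b0 hb0)).resolve_left haN
  have h2 : a0.val.2 < b.val.1 := ((OG_adj a0 b).mp (hAB a0 ha0 b hbB)).resolve_right hbN
  have h3 : ¬ (a0.val.2 < a.val.1 ∨ a.val.2 < a0.val.1) :=
    fun h => hAI a0 ha0 a haA ((OG_adj a0 a).mpr h)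
  push_neg at h3
  have h4 : ¬ (b0.val.2 < b.val.1 ∨ b.val.2 < b0.val.1) :=
    fun h => hBI b0 hb0 b hbB ((OG_adj b0 b).mpr h)
  push_neg at h4
  exact absurd (((h1.trans_le h3.1).trans h2).trans_le h4.1) (lt_irrefl _)

noncomputable def fA (n : ℕ) : OV (omega0 + omega0) :=
  ⟨((0 : Ordinal), ((n+1 : ℕ) : Ordinal)),
    by show (0 : Ordinal) < ((n+1 : ℕ) : Ordinal); exact_mod_cast Nat.succ_pos n,
    (nat_lt_omega0 (n+1)).trans (lt_add_of_pos_right _ omega0_pos)⟩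

noncomputable def fB (n : ℕ) : OV (omega0 + omega0) :=
  ⟨(omega0, omega0 + ((n+1 : ℕ) : Ordinal)),
    lt_add_of_pos_right _ (by show (0 : Ordinal) < ((n+1 : ℕ) : Ordinal)
                              exact_mod_cast Nat.succ_pos n),
    (add_lt_add_iff_left _).mpr (nat_lt_omega0 (n+1))⟩

lemma hAinf : {v : OV (omega0 + omega0) | v.val.1 = 0 ∧ v.val.2 < omega0}.Infinite := by
  apply Set.infinite_of_injective_forall_mem (f := fA)
  · intro m n h
    simp only [fA, Subtype.mk.injEq, Prod.mk.injEq] at h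
    exact Nat.succ_injective (by exact_mod_cast h.2)
  · intro n
    exact ⟨rfl, nat_lt_omega0 (n+1)⟩

lemma hBinf : {v : OV (omega0 + omega0) | v.val.1 = omega0}.Infinite := by
  apply Set.infinite_of_injective_forall_mem (f := fB)
  · intro m n h
    simp only [fB, Subtype.mk.injEq, Prod.mk.injEq] at h
    have h2 : ((m+1:ℕ):Ordinal) = ((n+1:ℕ):Ordinal) := add_left_cancel_iff.mp h.2
    exact Nat.succ_injective (by exact_mod_cast h2)
  · intro n
    exact rfl

lemma hAindep : ∀ u ∈ {v : OV (omega0 + omega0) | v.val.1 = 0 ∧ v.val.2 < omega0},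
    ∀ v ∈ {v : OV (omega0 + omega0) | v.val.1 = 0 ∧ v.val.2 < omega0},
    ¬ (OG1122 (omega0 + omega0)).Adj u v := by
  rintro u ⟨hu1, -⟩ v ⟨hv1, -⟩ h
  rcases (OG_adj u v).mp h with h | h
  · rw [hv1] at h; exact absurd (u.prop.1.trans h) (by simp)
  · rw [hu1] at h; exact absurd (v.prop.1.trans h) (by simp)

lemma hBindep : ∀ u ∈ {v : OV (omega0 + omega0) | v.val.1 = omega0},
    ∀ v ∈ {v : OV (omega0 + omega0) | v.val.1 = omega0},
    ¬ (OG1122 (omega0 + omega0)).Adj u v := by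
  intro u hu v hv h
  have hu1 : u.val.1 = omega0 := hu
  have hv1 : v.val.1 = omega0 := hv
  have hu2 : omega0 < u.val.2 := lt_of_le_of_lt (le_of_eq hu1.symm) u.prop.1
  have hv2 : omega0 < v.val.2 := lt_of_le_of_lt (le_of_eq hv1.symm) v.prop.1
  rcases (OG_adj u v).mp h with h | h
  · rw [hv1] at h; exact absurd (hu2.trans h) (lt_irrefl _)
  · rw [hu1] at h; exact absurd (hv2.trans h) (lt_irrefl _)

lemma hABadj : ∀ u ∈ {v : OV (omega0 + omega0) | v.val.1 = 0 ∧ v.val.2 < omega0},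
    ∀ v ∈ {v : OV (omega0 + omega0) | v.val.1 = omega0},
    (OG1122 (omega0 + omega0)).Adj u v := by
  rintro u ⟨-, hu2⟩ v hv
  have hv1 : v.val.1 = omega0 := hv
  exact (OG_adj u v).mpr (Or.inl (by rw [hv1]; exact hu2))

open Ordinal in
theorem stmt_8 :
    (let A : Set (OV (omega0 + omega0)) := {v | v.val.1 = 0 ∧ v.val.2 < omega0}
     let B : Set (OV (omega0 + omega0)) := {v | v.val.1 = omega0}
     A.Infinite ∧ B.Infinite ∧ Disjoint A B ∧
      (∀ u ∈ A, ∀ v ∈ A, ¬ (OG1122 (omega0 + omega0)).Adj u v) ∧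
      (∀ u ∈ B, ∀ v ∈ B, ¬ (OG1122 (omega0 + omega0)).Adj u v) ∧
      (∀ u ∈ A, ∀ v ∈ B, (OG1122 (omega0 + omega0)).Adj u v)) ∧
    ¬ Nonempty (OG1122 omega0 ≃g OG1122 (omega0 + omega0)) := by
  constructor
  · intro A B
    refine ⟨hAinf, hBinf, ?_, hAindep, hBindep, hABadj⟩
    rw [Set.disjoint_left]
    rintro v ⟨hv1, -⟩ hv2
    exact omega0_ne_zero ((hv2 : v.val.1 = omega0) ▸ hv1)
  · rintro ⟨e⟩
    apply no_Kww (⇑e ⁻¹' {v | v.val.1 = 0 ∧ v.val.2 < omega0}) (⇑e ⁻¹' {v | v.val.1 = omega0})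
    · exact hAinf.preimage (by simp [e.toEquiv.surjective.range_eq])
    · exact hBinf.preimage (by simp [e.toEquiv.surjective.range_eq])
    · intro u hu v hv hadj
      exact hAindep (e u) hu (e v) hv (e.map_adj_iff.mpr hadj)
    · intro u hu v hv hadj
      exact hBindep (e u) hu (e v) hv (e.map_adj_iff.mpr hadj)
    · intro u hu v hv
      exact e.map_adj_iff.mp (hABadj (e u) hu (e v) hv)
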